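/- Let ν > 1 and 0 < r₋ < r₊ be real numbers. With s := √(r₊ r₋ (ν²+3)), R²(r) := (r/4)·[3(ν²−1)r + (ν²+3)(r₊+r₋) − 4νs], N²(r) := (ν²+3)(r−r₊)(r−r₋)/(4R²(r)) and N^θ(r) := (2νr − s)/(2R²(r)): for every pair of real numbers (a,b) ≠ (0,0) there exists r > r₊ such that −a²N²(r) + R²(r)(aN^θ(r) + b)² > 0. That is, no nonzero linear combination a∂_t + b∂_θ of the Killing vector fields is timelike throughout the exterior region r > r₊. -/

import Mathlib

/-- s := √(r₊ r₋ (ν²+3)). -/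
noncomputable def sBH (ν rp rm : ℝ) : ℝ := Real.sqrt (rp * rm * (ν ^ 2 + 3))

/-- R²(r) := (r/4)·[3(ν²−1)r + (ν²+3)(r₊+r₋) − 4νs]. -/
noncomputable def R2 (ν rp rm r : ℝ) : ℝ :=
  r / 4 * (3 * (ν ^ 2 - 1) * r + (ν ^ 2 + 3) * (rp + rm) - 4 * ν * sBH ν rp rm)

/-- N²(r) := (ν²+3)(r−r₊)(r−r₋)/(4R²(r)). -/
noncomputable def N2 (ν rp rm r : ℝ) : ℝ :=
  (ν ^ 2 + 3) * (r - rp) * (r - rm) / (4 * R2 ν rp rm r)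

/-- N^θ(r) := (2νr − s)/(2R²(r)). -/
noncomputable def Nθ (ν rp rm r : ℝ) : ℝ :=
  (2 * ν * r - sBH ν rp rm) / (2 * R2 ν rp rm r)

lemma norm_eq (ν rp rm r a b : ℝ) (hp : 0 ≤ rp * rm * (ν ^ 2 + 3))
    (hR : R2 ν rp rm r ≠ 0) :
    -a ^ 2 * N2 ν rp rm r + R2 ν rp rm r * (a * Nθ ν rp rm r + b) ^ 2
      = a ^ 2 + a * b * (2 * ν * r - sBH ν rp rm) + b ^ 2 * R2 ν rp rm r := by
  have hs2 : sBH ν rp rm ^ 2 = rp * rm * (ν ^ 2 + 3) := Real.sq_sqrt hp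
  have hkey : 4 * R2 ν rp rm r
      = (2 * ν * r - sBH ν rp rm) ^ 2 - (ν ^ 2 + 3) * (r - rp) * (r - rm) := by
    rw [R2]; linear_combination -hs2
  rw [N2, Nθ]
  set s := sBH ν rp rm
  set X := R2 ν rp rm r
  field_simp
  linear_combination (-4 * a ^ 2) * hkey

/-- for every (a,b) ≠ (0,0) there exists r > r₊ where the squared
norm −a²N²(r) + R²(r)(aN^θ(r) + b)² of a∂_t + b∂_θ is positive: no nonzero
linear combination of the Killing vectors is timelike throughout the exterior. -/
theorem stmt4 (ν rp rm : ℝ) (hν : 1 < ν) (hrm : 0 < rm) (hr : rm < rp)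
    (a b : ℝ) (hab : (a, b) ≠ ((0 : ℝ), (0 : ℝ))) :
    ∃ r : ℝ, rp < r ∧
      0 < -a ^ 2 * N2 ν rp rm r + R2 ν rp rm r * (a * Nθ ν rp rm r + b) ^ 2 := by
  set s := sBH ν rp rm with hsdef
  have hs0 : 0 ≤ s := Real.sqrt_nonneg _
  have hν1 : (0:ℝ) < ν ^ 2 - 1 := by nlinarith
  have hrp : 0 < rp := hrm.trans hr
  have hp : 0 ≤ rp * rm * (ν ^ 2 + 3) := by positivity
  -- common positivity criterion for R2
  have hR2pos : ∀ r : ℝ, rp < r → 4 * ν * s / (3 * (ν ^ 2 - 1)) < r →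
      0 < R2 ν rp rm r := by
    intro r h1 h2
    have hr0 : 0 < r := hrp.trans h1
    have h3 : 4 * ν * s < 3 * (ν ^ 2 - 1) * r := by
      rw [div_lt_iff₀ (by positivity)] at h2
      linarith [h2]
    rw [R2]
    have hbr : 0 < 3 * (ν ^ 2 - 1) * r + (ν ^ 2 + 3) * (rp + rm) - 4 * ν * s := by
      nlinarith
    positivity
  rcases eq_or_ne b 0 with hb | hb
  · -- b = 0, a ≠ 0
    have ha : a ≠ 0 := by
      intro ha; exact hab (by rw [ha, hb])
    refine ⟨max (rp + 1) (4 * ν * s / (3 * (ν ^ 2 - 1)) + 1), ?_, ?_⟩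
    · exact lt_of_lt_of_le (by linarith) (le_max_left _ _)
    · have h1 : rp < max (rp + 1) (4 * ν * s / (3 * (ν ^ 2 - 1)) + 1) :=
        lt_of_lt_of_le (by linarith) (le_max_left _ _)
      have h2 : 4 * ν * s / (3 * (ν ^ 2 - 1)) < max (rp + 1) (4 * ν * s / (3 * (ν ^ 2 - 1)) + 1) :=
        lt_of_lt_of_le (by linarith) (le_max_right _ _)
      have hRp := hR2pos _ h1 h2
      rw [norm_eq ν rp rm _ a b hp hRp.ne', hb]
      have : a ^ 2 > 0 := by positivity
      nlinarith
  · -- b ≠ 0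
    set M := 4 * ν * s / (3 * (ν ^ 2 - 1)) with hM
    have hM0 : 0 ≤ M := by positivity
    set A := b ^ 2 * 3 * (ν ^ 2 - 1) / 4 with hA
    set B := 2 * a * b * ν + b ^ 2 * ((ν ^ 2 + 3) * (rp + rm) - 4 * ν * s) / 4 with hB
    set D := a ^ 2 - a * b * s with hD
    have hA0 : 0 < A := by
      rw [hA]; positivity
    set r := max (rp + 1) (max 1 ((|B| + |D| + 1) / A + M + 1)) with hrdef
    have hrp1 : rp < r := lt_of_lt_of_le (by linarith) (le_max_left _ _)
    have hr1 : (1:ℝ) ≤ r := le_trans (le_max_left _ _) (le_max_right _ _)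
    have hrbig : (|B| + |D| + 1) / A + M + 1 ≤ r :=
      le_trans (le_max_right _ _) (le_max_right _ _)
    have hdivpos : 0 < (|B| + |D| + 1) / A := by positivity
    have hrM : M < r := by linarith
    have hRp := hR2pos r hrp1 hrM
    have hAr : |B| + |D| + 1 ≤ A * r := by
      rw [← div_le_iff₀' hA0]
      linarith
    refine ⟨r, hrp1, ?_⟩
    rw [norm_eq ν rp rm r a b hp hRp.ne']
    have hval : a ^ 2 + a * b * (2 * ν * r - s) + b ^ 2 * R2 ν rp rm r
        = A * r ^ 2 + B * r + D := by
      rw [R2, hA, hB, hD, ← hsdef]; ring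
    rw [hval]
    nlinarith [neg_abs_le B, neg_abs_le D, abs_nonneg B, abs_nonneg D,
      mul_le_mul_of_nonneg_right hAr (by linarith : (0:ℝ) ≤ r), sq_nonneg r]
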